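/- Let a < 0, b > 0, c = a/b and c₀ < 0, and let ρ(x,t) = ρ¹(x,t) + ρ²(x,t) + ρ³(x,t) be the explicit solution defined below. Then for every x ≥ 0, ρ(x,t) → −c e^{c x} as t → ∞; that is, the solution converges pointwise to the stationary density determined by the new drift and diffusion coefficients. -/

import Mathlib

open MeasureTheory Set Filter Topology

/-- The standard normal cumulative distribution function `Φ`. -/
noncomputable def stdNormalCdf (z : ℝ) : ℝ :=
  ∫ x in Iic z, (Real.sqrt (2 * Real.pi))⁻¹ * Real.exp (-x ^ 2 / 2)

lemma gauss_shift_integrable (l : ℝ) :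
    Integrable (fun x : ℝ => Real.exp (l * x) * ((Real.sqrt (2 * Real.pi))⁻¹ * Real.exp (-x ^ 2 / 2))) := by
  have h : Integrable (fun x : ℝ => Real.exp (-(1/2 : ℝ) * x ^ 2)) :=
    integrable_exp_neg_mul_sq (by norm_num)
  have h2 := ((h.comp_sub_right l).const_mul ((Real.sqrt (2 * Real.pi))⁻¹ * Real.exp (l ^ 2 / 2)))
  refine h2.congr (Eventually.of_forall fun x => ?_)
  simp only []
  rw [mul_assoc, ← Real.exp_add, mul_comm (Real.exp (l*x)), mul_assoc, ← Real.exp_add]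
  ring_nf

lemma gauss_mgf (l : ℝ) :
    ∫ x : ℝ, Real.exp (l * x) * ((Real.sqrt (2 * Real.pi))⁻¹ * Real.exp (-x ^ 2 / 2))
      = Real.exp (l ^ 2 / 2) := by
  have h1 : ∀ x : ℝ, Real.exp (l * x) * ((Real.sqrt (2 * Real.pi))⁻¹ * Real.exp (-x ^ 2 / 2))
      = (Real.sqrt (2 * Real.pi))⁻¹ * Real.exp (l ^ 2 / 2) * Real.exp (-(1/2 : ℝ) * (x - l) ^ 2) := by
    intro x
    rw [mul_comm (Real.exp (l*x)), mul_assoc, ← Real.exp_add, mul_assoc, ← Real.exp_add]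
    ring_nf
  simp_rw [h1]
  rw [MeasureTheory.integral_const_mul]
  rw [show (fun x : ℝ => Real.exp (-(1/2 : ℝ) * (x - l) ^ 2))
      = (fun x : ℝ => Real.exp (-(1/2 : ℝ) * x ^ 2)) ∘ (fun x => x - l) from rfl]
  rw [Function.comp_def, integral_sub_right_eq_self (fun x : ℝ => Real.exp (-(1/2 : ℝ) * x ^ 2)) l]
  rw [integral_gaussian]
  have : Real.sqrt (Real.pi / (1/2)) = Real.sqrt (2 * Real.pi) := by norm_num [mul_comm]
  rw [this]
  have hpos : (0:ℝ) < Real.sqrt (2 * Real.pi) :=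
    Real.sqrt_pos.2 (by positivity)
  field_simp

lemma phi_integrable :
    Integrable (fun x : ℝ => (Real.sqrt (2 * Real.pi))⁻¹ * Real.exp (-x ^ 2 / 2)) := by
  have := gauss_shift_integrable 0
  simpa using this

lemma phi_total :
    ∫ x : ℝ, (Real.sqrt (2 * Real.pi))⁻¹ * Real.exp (-x ^ 2 / 2) = 1 := by
  have := gauss_mgf 0
  simpa using this

lemma phi_nonneg (x : ℝ) : 0 ≤ (Real.sqrt (2 * Real.pi))⁻¹ * Real.exp (-x ^ 2 / 2) := by
  positivity

lemma stdNormalCdf_nonneg (z : ℝ) : 0 ≤ stdNormalCdf z :=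
  setIntegral_nonneg measurableSet_Iic fun x _ => phi_nonneg x

lemma stdNormalCdf_chernoff {l : ℝ} (hl : 0 ≤ l) (z : ℝ) :
    stdNormalCdf z ≤ Real.exp (l * z + l ^ 2 / 2) := by
  have hw : Integrable (fun x : ℝ => Real.exp (l * z) *
      (Real.exp (-l * x) * ((Real.sqrt (2 * Real.pi))⁻¹ * Real.exp (-x ^ 2 / 2)))) :=
    ((gauss_shift_integrable (-l)).const_mul _)
  have h1 : stdNormalCdf z ≤ ∫ x in Iic z, Real.exp (l * z) *
      (Real.exp (-l * x) * ((Real.sqrt (2 * Real.pi))⁻¹ * Real.exp (-x ^ 2 / 2))) := by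
    refine setIntegral_mono_on phi_integrable.integrableOn hw.integrableOn measurableSet_Iic
      fun x hx => ?_
    rw [← mul_assoc, ← Real.exp_add]
    have hxz : (0:ℝ) ≤ l * z + -l * x := by
      have := mem_Iic.mp hx
      nlinarith
    nlinarith [Real.one_le_exp hxz, phi_nonneg x, Real.exp_pos (l * z + -l * x)]
  have h2 : ∫ x in Iic z, Real.exp (l * z) *
      (Real.exp (-l * x) * ((Real.sqrt (2 * Real.pi))⁻¹ * Real.exp (-x ^ 2 / 2)))
      ≤ ∫ x : ℝ, Real.exp (l * z) *
      (Real.exp (-l * x) * ((Real.sqrt (2 * Real.pi))⁻¹ * Real.exp (-x ^ 2 / 2))) := by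
    refine setIntegral_le_integral hw (Eventually.of_forall fun x => ?_)
    have := phi_nonneg x
    positivity
  have h3 : ∫ x : ℝ, Real.exp (l * z) *
      (Real.exp (-l * x) * ((Real.sqrt (2 * Real.pi))⁻¹ * Real.exp (-x ^ 2 / 2)))
      = Real.exp (l * z + l ^ 2 / 2) := by
    rw [MeasureTheory.integral_const_mul, gauss_mgf (-l), ← Real.exp_add]
    ring_nf
  linarith

lemma tail_le (z : ℝ) :
    ∫ x in Ioi z, (Real.sqrt (2 * Real.pi))⁻¹ * Real.exp (-x ^ 2 / 2)
      ≤ Real.exp (-z + 1 / 2) := by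
  have hw : Integrable (fun x : ℝ => Real.exp (-z) *
      (Real.exp (1 * x) * ((Real.sqrt (2 * Real.pi))⁻¹ * Real.exp (-x ^ 2 / 2)))) :=
    ((gauss_shift_integrable 1).const_mul _)
  have h1 : ∫ x in Ioi z, (Real.sqrt (2 * Real.pi))⁻¹ * Real.exp (-x ^ 2 / 2)
      ≤ ∫ x in Ioi z, Real.exp (-z) *
      (Real.exp (1 * x) * ((Real.sqrt (2 * Real.pi))⁻¹ * Real.exp (-x ^ 2 / 2))) := by
    refine setIntegral_mono_on phi_integrable.integrableOn hw.integrableOn measurableSet_Ioi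
      fun x hx => ?_
    rw [← mul_assoc, ← Real.exp_add]
    have hxz : (0:ℝ) ≤ -z + 1 * x := by
      have := mem_Ioi.mp hx; linarith
    nlinarith [Real.one_le_exp hxz, phi_nonneg x, Real.exp_pos (-z + 1 * x)]
  have h2 : ∫ x in Ioi z, Real.exp (-z) *
      (Real.exp (1 * x) * ((Real.sqrt (2 * Real.pi))⁻¹ * Real.exp (-x ^ 2 / 2)))
      ≤ ∫ x : ℝ, Real.exp (-z) *
      (Real.exp (1 * x) * ((Real.sqrt (2 * Real.pi))⁻¹ * Real.exp (-x ^ 2 / 2))) := by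
    refine setIntegral_le_integral hw (Eventually.of_forall fun x => ?_)
    have := phi_nonneg x
    positivity
  have h3 : ∫ x : ℝ, Real.exp (-z) *
      (Real.exp (1 * x) * ((Real.sqrt (2 * Real.pi))⁻¹ * Real.exp (-x ^ 2 / 2)))
      = Real.exp (-z + 1 / 2) := by
    rw [MeasureTheory.integral_const_mul, gauss_mgf 1, ← Real.exp_add]
    norm_num
  linarith

lemma stdNormalCdf_eq_one_sub (z : ℝ) :
    stdNormalCdf z = 1 - ∫ x in Ioi z, (Real.sqrt (2 * Real.pi))⁻¹ * Real.exp (-x ^ 2 / 2) := by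
  have := intervalIntegral.integral_Iic_add_Ioi (b := z)
    phi_integrable.integrableOn phi_integrable.integrableOn
  rw [phi_total] at this
  unfold stdNormalCdf
  linarith

lemma stdNormalCdf_le_one (z : ℝ) : stdNormalCdf z ≤ 1 := by
  rw [stdNormalCdf_eq_one_sub]
  have : 0 ≤ ∫ x in Ioi z, (Real.sqrt (2 * Real.pi))⁻¹ * Real.exp (-x ^ 2 / 2) :=
    setIntegral_nonneg measurableSet_Ioi fun x _ => phi_nonneg x
  linarith

lemma tendsto_stdNormalCdf_atTop : Tendsto stdNormalCdf atTop (𝓝 1) := by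
  have hlow : Tendsto (fun z : ℝ => 1 - Real.exp (-z + 1 / 2)) atTop (𝓝 1) := by
    have h1 : Tendsto (fun z : ℝ => -z + 1 / 2) atTop atBot :=
      tendsto_atBot_add_const_right _ _ tendsto_neg_atTop_atBot
    have := Real.tendsto_exp_atBot.comp h1
    simpa using (tendsto_const_nhds (x := (1:ℝ))).sub this
  refine tendsto_of_tendsto_of_tendsto_of_le_of_le hlow tendsto_const_nhds
    (fun z => ?_) (fun z => stdNormalCdf_le_one z)
  rw [stdNormalCdf_eq_one_sub]
  have := tail_le z
  linarith

lemma tendsto_sqrt_atTop' : Tendsto Real.sqrt atTop atTop := by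
  rw [tendsto_atTop_atTop]
  intro M
  refine ⟨M ^ 2 ⊔ 0, fun t ht => ?_⟩
  calc M ≤ |M| := le_abs_self M
    _ = Real.sqrt (M ^ 2) := (Real.sqrt_sq_eq_abs M).symm
    _ ≤ Real.sqrt t := Real.sqrt_le_sqrt (le_trans le_sup_left ht)

/-- The scaled argument tends to infinity when the linear coefficient is positive. -/
lemma tendsto_arg_atTop {b β : ℝ} (hb : 0 < b) (hβ : 0 < β) (q : ℝ) :
    Tendsto (fun t : ℝ => (β * t + q) / Real.sqrt (2 * b * t)) atTop atTop := by
  have hgrow : Tendsto (fun t : ℝ => β / (2 * Real.sqrt (2 * b)) * Real.sqrt t) atTop atTop := by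
    refine Tendsto.const_mul_atTop ?_ tendsto_sqrt_atTop'
    have h2b : 0 < Real.sqrt (2 * b) := Real.sqrt_pos.2 (by positivity)
    positivity
  refine tendsto_atTop_mono' atTop ?_ hgrow
  filter_upwards [eventually_ge_atTop (1 : ℝ), eventually_ge_atTop (2 * |q| / β)] with t h1 h2
  have ht : (0:ℝ) < t := by linarith
  have hs : Real.sqrt (2 * b * t) = Real.sqrt (2 * b) * Real.sqrt t := by
    rw [Real.sqrt_mul (by positivity)]
  have h2b : 0 < Real.sqrt (2 * b) := Real.sqrt_pos.2 (by positivity)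
  have hst : 0 < Real.sqrt t := Real.sqrt_pos.2 ht
  have hsq : Real.sqrt t * Real.sqrt t = t := Real.mul_self_sqrt ht.le
  rw [hs, le_div_iff₀ (by positivity)]
  have hkey : β / (2 * Real.sqrt (2 * b)) * Real.sqrt t * (Real.sqrt (2 * b) * Real.sqrt t)
      = β * t / 2 := by
    rw [show β / (2 * Real.sqrt (2 * b)) * Real.sqrt t * (Real.sqrt (2 * b) * Real.sqrt t)
      = β * (Real.sqrt t * Real.sqrt t) * (Real.sqrt (2 * b) / Real.sqrt (2 * b)) / 2 by ring,
      div_self h2b.ne', hsq]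
    ring
  rw [hkey]
  have hq : |q| ≤ β * t / 2 := by
    rw [div_le_iff₀ hβ] at h2
    nlinarith
  nlinarith [neg_abs_le q]

/-- Key zero lemma (Chernoff): `e^{αt+p} Φ((βt+q)/√(2bt)) → 0` when a suitable
nonnegative `l` makes `α + lβ + l²b < 0`. -/
lemma key_zero {b : ℝ} (hb : 0 < b) (α β p q l : ℝ) (hl : 0 ≤ l)
    (hneg : α + l * β + l ^ 2 * b < 0) :
    Tendsto (fun t : ℝ => Real.exp (α * t + p) *
      stdNormalCdf ((β * t + q) / Real.sqrt (2 * b * t))) atTop (𝓝 0) := by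
  have hup : Tendsto (fun t : ℝ => Real.exp ((α + l * β + l ^ 2 * b) * t + (p + l * q)))
      atTop (𝓝 0) := by
    have h1 : Tendsto (fun t : ℝ => (α + l * β + l ^ 2 * b) * t + (p + l * q)) atTop atBot :=
      tendsto_atBot_add_const_right _ _ ((tendsto_const_mul_atBot_of_neg hneg).2 tendsto_id)
    exact Real.tendsto_exp_atBot.comp h1
  refine tendsto_of_tendsto_of_tendsto_of_le_of_le' tendsto_const_nhds hup ?_ ?_
  · filter_upwards with t
    exact mul_nonneg (Real.exp_pos _).le (stdNormalCdf_nonneg _)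
  · filter_upwards [eventually_gt_atTop (0 : ℝ)] with t ht
    set z := (β * t + q) / Real.sqrt (2 * b * t) with hz
    have hsp : (0:ℝ) < Real.sqrt (2 * b * t) := Real.sqrt_pos.2 (by positivity)
    have hlt : 0 ≤ l * Real.sqrt (2 * b * t) := mul_nonneg hl hsp.le
    have hch := stdNormalCdf_chernoff hlt z
    have harg : l * Real.sqrt (2 * b * t) * z + (l * Real.sqrt (2 * b * t)) ^ 2 / 2
        = l * (β * t + q) + l ^ 2 * b * t := by
      rw [hz, mul_pow, Real.sq_sqrt (by positivity : (0:ℝ) ≤ 2 * b * t)]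
      field_simp
    rw [harg] at hch
    calc Real.exp (α * t + p) * stdNormalCdf z
        ≤ Real.exp (α * t + p) * Real.exp (l * (β * t + q) + l ^ 2 * b * t) := by
          exact mul_le_mul_of_nonneg_left hch (Real.exp_pos _).le
      _ = Real.exp ((α + l * β + l ^ 2 * b) * t + (p + l * q)) := by
          rw [← Real.exp_add]; ring_nf

/-- First part `ρ¹` of the explicit solution (with `c = a/b`, `σ = √(2bt)`). -/
noncomputable def explRho1 (a b c₀ : ℝ) (x t : ℝ) : ℝ :=
  -c₀ * Real.exp (c₀ * (c₀ * b * t + x - a * t)) *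
    stdNormalCdf ((2 * c₀ * b * t + x - a * t) / Real.sqrt (2 * b * t))

/-- Second part `ρ²` of the explicit solution (with `d = c₀ − a/b`). -/
noncomputable def explRho2 (a b c₀ : ℝ) (x t : ℝ) : ℝ :=
  -c₀ * Real.exp ((c₀ - a / b) * ((c₀ - a / b) * b * t - x + a * t)) *
    stdNormalCdf ((2 * (c₀ - a / b) * b * t - x + a * t) / Real.sqrt (2 * b * t))

/-- Third part `ρ³` of the explicit solution (with `c = a/b`). -/
noncomputable def explRho3 (a b c₀ : ℝ) (x t : ℝ) : ℝ :=
  -(a / b) * Real.exp ((a / b) * x) *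
      stdNormalCdf (-(x + a * t) / Real.sqrt (2 * b * t))
  + (a / b) * Real.exp ((a / b) * x) * Real.exp (c₀ * (c₀ * b * t - x - a * t)) *
      stdNormalCdf ((2 * c₀ * b * t - x - a * t) / Real.sqrt (2 * b * t))

/-- The explicit solution `ρ = ρ¹ + ρ² + ρ³` of the Smoluchowski equation on the
half-line with exponential initial datum `ρ₀(x) = −c₀ e^{c₀ x}`. -/
noncomputable def explRho (a b c₀ : ℝ) (x t : ℝ) : ℝ :=
  explRho1 a b c₀ x t + explRho2 a b c₀ x t + explRho3 a b c₀ x t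

/-- For `a < 0` the explicit solution converges pointwise, as `t → ∞`, to the
stationary density `−c e^{c x}` with `c = a/b`. -/
theorem stmt_12 (a b c₀ : ℝ) (ha : a < 0) (hb : 0 < b) (hc₀ : c₀ < 0) :
    ∀ x ≥ (0:ℝ),
      Tendsto (fun t => explRho a b c₀ x t) atTop
        (𝓝 (-(a / b) * Real.exp ((a / b) * x))) := by
  intro x _hx
  set α : ℝ := c₀ * c₀ * b - c₀ * a with hα
  set β : ℝ := 2 * c₀ * b - a with hβ
  -- choose a Chernoff parameter
  obtain ⟨l, hl, hneg⟩ : ∃ l : ℝ, 0 ≤ l ∧ α + l * β + l ^ 2 * b < 0 := by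
    rcases le_or_gt 0 β with hβ0 | hβ0
    · refine ⟨0, le_refl 0, ?_⟩
      have h1 : a ≤ 2 * c₀ * b := by rw [hβ] at hβ0; linarith
      have h2 : c₀ * (2 * c₀ * b) ≤ c₀ * a := mul_le_mul_of_nonpos_left h1 hc₀.le
      have h3 : 0 < c₀ * c₀ * b := mul_pos (mul_pos_of_neg_of_neg hc₀ hc₀) hb
      rw [hα]; nlinarith
    · refine ⟨-β / (2 * b), (div_pos (neg_pos.2 hβ0) (by positivity)).le, ?_⟩
      have hval : α + -β / (2 * b) * β + (-β / (2 * b)) ^ 2 * b = -(a ^ 2) / (4 * b) := by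
        rw [hα, hβ]; field_simp; ring
      rw [hval, neg_div]
      have ha2 : 0 < a ^ 2 := by nlinarith
      have h4 : 0 < a ^ 2 / (4 * b) := div_pos ha2 (by positivity)
      linarith
  -- ρ¹ → 0
  have h1 : Tendsto (fun t => explRho1 a b c₀ x t) atTop (𝓝 0) := by
    have hkey := (key_zero hb α β (c₀ * x) x l hl hneg).const_mul (-c₀)
    rw [mul_zero] at hkey
    refine hkey.congr fun t => ?_
    unfold explRho1
    rw [show c₀ * (c₀ * b * t + x - a * t) = α * t + c₀ * x by rw [hα]; ring,
      show 2 * c₀ * b * t + x - a * t = β * t + x by rw [hβ]; ring]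
    ring
  -- ρ² → 0
  have h2 : Tendsto (fun t => explRho2 a b c₀ x t) atTop (𝓝 0) := by
    have hkey := (key_zero hb α β (-(c₀ - a / b) * x) (-x) l hl hneg).const_mul (-c₀)
    rw [mul_zero] at hkey
    refine hkey.congr fun t => ?_
    unfold explRho2
    rw [show (c₀ - a / b) * ((c₀ - a / b) * b * t - x + a * t) = α * t + -(c₀ - a / b) * x by
        rw [hα]; field_simp; ring,
      show 2 * (c₀ - a / b) * b * t - x + a * t = β * t + -x by rw [hβ]; field_simp; ring]
    ring
  -- ρ³ second term → 0
  have h3b : Tendsto (fun t => (a / b) * Real.exp ((a / b) * x) *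
      Real.exp (c₀ * (c₀ * b * t - x - a * t)) *
      stdNormalCdf ((2 * c₀ * b * t - x - a * t) / Real.sqrt (2 * b * t))) atTop (𝓝 0) := by
    have hkey := (key_zero hb α β (-c₀ * x) (-x) l hl hneg).const_mul
      ((a / b) * Real.exp ((a / b) * x))
    rw [mul_zero] at hkey
    refine hkey.congr fun t => ?_
    rw [show c₀ * (c₀ * b * t - x - a * t) = α * t + -c₀ * x by rw [hα]; ring,
      show 2 * c₀ * b * t - x - a * t = β * t + -x by rw [hβ]; ring]
    ring
  -- ρ³ first term → limit
  have h3a : Tendsto (fun t => -(a / b) * Real.exp ((a / b) * x) *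
      stdNormalCdf (-(x + a * t) / Real.sqrt (2 * b * t))) atTop
      (𝓝 (-(a / b) * Real.exp ((a / b) * x))) := by
    have harg := tendsto_arg_atTop hb (show (0:ℝ) < -a by linarith) (-x)
    have hcdf := tendsto_stdNormalCdf_atTop.comp harg
    have hkey := hcdf.const_mul (-(a / b) * Real.exp ((a / b) * x))
    rw [mul_one] at hkey
    refine hkey.congr fun t => ?_
    simp only [Function.comp]
    rw [show -a * t + -x = -(x + a * t) by ring]
  have h3 : Tendsto (fun t => explRho3 a b c₀ x t) atTop
      (𝓝 (-(a / b) * Real.exp ((a / b) * x))) := by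
    have := h3a.add h3b
    rw [add_zero] at this
    exact this.congr fun t => by unfold explRho3; ring
  have := (h1.add h2).add h3
  rw [add_zero, zero_add] at this
  exact this.congr fun t => by unfold explRho; ring
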